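/- Let n ≥ 2 and let τ ∈ ℝⁿ₊. Then there exist a compact set K ⊆ ℝⁿ₊ that is a neighborhood of τ (i.e., τ lies in the interior of K) and a constant c > 0 such that for every measurable set E ⊆ K and every x ∈ K one has b_{ℝⁿ₊}χ_E(x) ≥ c·|E|, where |E| is the Lebesgue measure of E and χ_E is the characteristic function of E. -/

import Mathlib

set_option maxHeartbeats 1000000


open MeasureTheory Set

noncomputable section

/-- The last coordinate of a point of `ℝⁿ`. -/
def lastCoord {n : ℕ} (x : EuclideanSpace ℝ (Fin n)) : ℝ :=
  if h : n - 1 < n then x ⟨n - 1, h⟩ else 0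

/-- Reflection in the hyperplane `xₙ = 0`: negate the last coordinate. -/
def reflectLast {n : ℕ} (y : EuclideanSpace ℝ (Fin n)) : EuclideanSpace ℝ (Fin n) :=
  WithLp.toLp 2 fun i => if (i : ℕ) = n - 1 then -y i else y i

/-- The open upper half-space `ℝⁿ₊`. -/
def upperHalfSpace (n : ℕ) : Set (EuclideanSpace ℝ (Fin n)) :=
  {x | 0 < lastCoord x}

/-- The harmonic Bergman kernel of the upper half-space. -/
def harmonicKernel {n : ℕ} (x y : EuclideanSpace ℝ (Fin n)) : ℝ :=
  (2 / Real.pi ^ ((n : ℝ) / 2)) * Real.Gamma ((n : ℝ) / 2) *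
    (((n : ℝ) * (lastCoord x + lastCoord y) ^ 2 - ‖x - reflectLast y‖ ^ 2) /
      ‖x - reflectLast y‖ ^ (n + 2))

/-- The harmonic Bergman projection of the upper half-space. -/
def harmonicBergman {n : ℕ} (f : EuclideanSpace ℝ (Fin n) → ℝ)
    (x : EuclideanSpace ℝ (Fin n)) : ℝ :=
  ∫ y in upperHalfSpace n, harmonicKernel x y * f y

lemma normsq {n : ℕ} (x : EuclideanSpace ℝ (Fin n)) : ‖x‖ ^ 2 = ∑ i, (x i) ^ 2 := by
  rw [EuclideanSpace.norm_eq, Real.sq_sqrt (by positivity)]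
  simp [Real.norm_eq_abs, sq_abs]

lemma abs_coord_le {n : ℕ} (x : EuclideanSpace ℝ (Fin n)) (i : Fin n) : |x i| ≤ ‖x‖ := by
  have h1 : (x i) ^ 2 ≤ ‖x‖ ^ 2 := by
    rw [normsq]
    exact Finset.single_le_sum (f := fun j => (x j) ^ 2) (fun _ _ => sq_nonneg _)
      (Finset.mem_univ i)
  nlinarith [abs_nonneg (x i), norm_nonneg x, sq_abs (x i)]

lemma norm_reflect {n : ℕ} (y : EuclideanSpace ℝ (Fin n)) : ‖reflectLast y‖ = ‖y‖ := by
  rw [EuclideanSpace.norm_eq, EuclideanSpace.norm_eq]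
  congr 1
  refine Finset.sum_congr rfl fun i _ => ?_
  by_cases h : (i : ℕ) = n - 1 <;> simp [reflectLast, h]

lemma sub_coord {n : ℕ} (x y : EuclideanSpace ℝ (Fin n)) (i : Fin n) :
    (x - y) i = x i - y i := rfl

lemma reflect_normsq {n : ℕ} (hn : 1 ≤ n) (x y : EuclideanSpace ℝ (Fin n)) :
    ‖x - reflectLast y‖ ^ 2
      = ‖x - y‖ ^ 2 + (lastCoord x + lastCoord y) ^ 2 - (lastCoord x - lastCoord y) ^ 2 := by
  have hN : n - 1 < n := by omega
  set N : Fin n := ⟨n - 1, hN⟩ with hNdef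
  have hx : lastCoord x = x N := dif_pos hN
  have hy : lastCoord y = y N := dif_pos hN
  rw [normsq, normsq, hx, hy]
  have h1 : ∀ i : Fin n, ((x - reflectLast y) i) ^ 2
      = ((x - y) i) ^ 2 + (if i = N then (x N + y N) ^ 2 - (x N - y N) ^ 2 else 0) := by
    intro i
    rw [sub_coord, sub_coord]
    by_cases h : (i : ℕ) = n - 1
    · have hiN : i = N := Fin.ext h
      subst hiN
      simp [reflectLast, h]
    · have hiN : i ≠ N := fun hc => h (by rw [hc])
      simp [reflectLast, h, hiN]
  simp only [h1]
  rw [Finset.sum_add_distrib, Finset.sum_ite_eq' Finset.univ N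
    (fun _ => (x N + y N) ^ 2 - (x N - y N) ^ 2)]
  simp
  ring

lemma measurable_lastCoord {n : ℕ} : Measurable (lastCoord (n := n)) := by
  unfold lastCoord
  split
  · exact (measurable_pi_apply _).comp (WithLp.measurable_ofLp _ _)
  · exact measurable_const

lemma measurable_reflectLast {n : ℕ} : Measurable (reflectLast (n := n)) := by
  refine (WithLp.measurable_toLp 2 _).comp (f := fun y : EuclideanSpace ℝ (Fin n) => fun i : Fin n => if (i : ℕ) = n - 1 then -y i else y i) ?_
  apply measurable_pi_lambda
  intro i
  by_cases h : (i : ℕ) = n - 1 <;> simp only [reflectLast, h, if_true, if_false]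
  · exact ((measurable_pi_apply i).comp (WithLp.measurable_ofLp _ _)).neg
  · exact (measurable_pi_apply i).comp (WithLp.measurable_ofLp _ _)

lemma measurable_kernel {n : ℕ} (x : EuclideanSpace ℝ (Fin n)) :
    Measurable (fun y => harmonicKernel x y) := by
  unfold harmonicKernel
  apply Measurable.const_mul
  apply Measurable.div
  · apply Measurable.sub
    · exact (((measurable_lastCoord.const_add _).pow_const 2).const_mul _)
    · exact ((measurable_const.sub measurable_reflectLast).norm.pow_const 2)
  · exact (measurable_const.sub measurable_reflectLast).norm.pow_const _

theorem harmonicBergman_lower_pointwise_bound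
    (n : ℕ) (hn : 2 ≤ n) (τ : EuclideanSpace ℝ (Fin n)) (hτ : τ ∈ upperHalfSpace n) :
    ∃ K : Set (EuclideanSpace ℝ (Fin n)), K ⊆ upperHalfSpace n ∧ IsCompact K ∧
      τ ∈ interior K ∧
      ∃ c : ℝ, 0 < c ∧
        ∀ E : Set (EuclideanSpace ℝ (Fin n)), MeasurableSet E → E ⊆ K → ∀ x ∈ K,
          c * (volume E).toReal ≤ harmonicBergman (E.indicator fun _ => (1 : ℝ)) x := by
  classical
  have hN : n - 1 < n := by omega
  set N : Fin n := ⟨n - 1, hN⟩ with hNdef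
  have hlast : ∀ z : EuclideanSpace ℝ (Fin n), lastCoord z = z N := fun z => dif_pos hN
  set t : ℝ := lastCoord τ with ht
  have htpos : 0 < t := hτ
  set r : ℝ := t / 4 with hr
  have hrpos : 0 < r := by positivity
  set K := Metric.closedBall τ r with hK
  -- coordinate bound in K
  have coordK : ∀ x ∈ K, |x N - τ N| ≤ r := by
    intro x hx
    have h1 : ‖x - τ‖ ≤ r := by
      rwa [Metric.mem_closedBall, dist_eq_norm] at hx
    calc |x N - τ N| = |(x - τ) N| := by rw [sub_coord]
      _ ≤ ‖x - τ‖ := abs_coord_le _ _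
      _ ≤ r := h1
  have hKsub : K ⊆ upperHalfSpace n := by
    intro x hx
    have := coordK x hx
    have hτN : τ N = t := (hlast τ).symm
    have := abs_le.mp this
    show 0 < lastCoord x
    rw [hlast]
    have : τ N - r ≤ x N := by linarith [this.1]
    rw [hτN] at this
    rw [hr] at this
    linarith
  -- constants
  set C : ℝ := (2 / Real.pi ^ ((n : ℝ) / 2)) * Real.Gamma ((n : ℝ) / 2) with hC
  have hCpos : 0 < C := by
    apply mul_pos
    · apply div_pos two_pos
      exact Real.rpow_pos_of_pos Real.pi_pos _
    · exact Real.Gamma_pos_of_pos (by positivity)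
  set M : ℝ := 2 * ‖τ‖ + 2 * r with hM
  have hτnorm : t ≤ ‖τ‖ := by
    have := abs_coord_le τ N
    have hτN : τ N = t := (hlast τ).symm
    rw [hτN] at this
    calc t ≤ |t| := le_abs_self t
      _ ≤ ‖τ‖ := this
  have hMpos : 0 < M := by rw [hM]; nlinarith
  set c : ℝ := C * (2 * t ^ 2 / M ^ (n + 2)) with hc
  have hcpos : 0 < c := by
    apply mul_pos hCpos
    positivity
  set B : ℝ := C * ((n * (5 * t / 2) ^ 2) / (3 * t / 2) ^ (n + 2)) with hBdef
  -- key bounds for the kernel on K × K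
  have key : ∀ x ∈ K, ∀ y ∈ K, c ≤ harmonicKernel x y ∧ harmonicKernel x y ≤ B := by
    intro x hx y hy
    have hxc := abs_le.mp (coordK x hx)
    have hyc := abs_le.mp (coordK y hy)
    have hτN : τ N = t := (hlast τ).symm
    set s : ℝ := x N + y N with hs
    set d : ℝ := ‖x - y‖ with hd
    set D : ℝ := ‖x - reflectLast y‖ with hD
    have hs1 : 3 * t / 2 ≤ s := by
      rw [hτN] at hxc hyc; rw [hs, hr] at *; linarith [hxc.1, hyc.1]
    have hs2 : s ≤ 5 * t / 2 := by
      rw [hτN] at hxc hyc; rw [hs, hr] at *; linarith [hxc.2, hyc.2]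
    have hspos : 0 < s := by linarith
    have hd0 : 0 ≤ d := norm_nonneg _
    have hdle : d ≤ t / 2 := by
      have h1 : ‖x - τ‖ ≤ r := by rwa [Metric.mem_closedBall, dist_eq_norm] at hx
      have h2 : ‖y - τ‖ ≤ r := by rwa [Metric.mem_closedBall, dist_eq_norm] at hy
      have : ‖x - y‖ ≤ ‖x - τ‖ + ‖y - τ‖ := by
        calc ‖x - y‖ = ‖(x - τ) - (y - τ)‖ := by rw [sub_sub_sub_cancel_right]
          _ ≤ ‖x - τ‖ + ‖y - τ‖ := norm_sub_le _ _
      rw [hd, hr] at *; linarith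
    have hD2 : D ^ 2 = d ^ 2 + s ^ 2 - (x N - y N) ^ 2 := by
      rw [hD, hd, hs, reflect_normsq (by omega) x y, hlast, hlast]
    have hxyN : |x N - y N| ≤ d := by
      calc |x N - y N| = |(x - y) N| := by rw [sub_coord]
        _ ≤ ‖x - y‖ := abs_coord_le _ _
    have hxyN2 : (x N - y N) ^ 2 ≤ d ^ 2 := by
      nlinarith [sq_abs (x N - y N), hxyN, abs_nonneg (x N - y N)]
    have hD0 : 0 ≤ D := norm_nonneg _
    have hD2ge : s ^ 2 ≤ D ^ 2 := by rw [hD2]; linarith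
    have hDs : s ≤ D := by
      have h' := Real.sqrt_le_sqrt hD2ge
      rwa [Real.sqrt_sq hspos.le, Real.sqrt_sq hD0] at h'
    have hDpos : 0 < D := lt_of_lt_of_le hspos hDs
    have hDM : D ≤ M := by
      have h1 : ‖x‖ ≤ ‖τ‖ + r := by
        have h1' : ‖x - τ‖ ≤ r := by rwa [Metric.mem_closedBall, dist_eq_norm] at hx
        calc ‖x‖ = ‖(x - τ) + τ‖ := by rw [sub_add_cancel]
          _ ≤ ‖x - τ‖ + ‖τ‖ := norm_add_le _ _
          _ ≤ ‖τ‖ + r := by linarith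
      have h2 : ‖y‖ ≤ ‖τ‖ + r := by
        have h2' : ‖y - τ‖ ≤ r := by rwa [Metric.mem_closedBall, dist_eq_norm] at hy
        calc ‖y‖ = ‖(y - τ) + τ‖ := by rw [sub_add_cancel]
          _ ≤ ‖y - τ‖ + ‖τ‖ := norm_add_le _ _
          _ ≤ ‖τ‖ + r := by linarith
      calc D ≤ ‖x‖ + ‖reflectLast y‖ := norm_sub_le _ _
        _ = ‖x‖ + ‖y‖ := by rw [norm_reflect]
        _ ≤ M := by rw [hM]; linarith
    -- numerator bounds
    have hnR : (2 : ℝ) ≤ (n : ℝ) := by exact_mod_cast hn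
    have hnum_lb : 2 * t ^ 2 ≤ (n : ℝ) * s ^ 2 - D ^ 2 := by
      have h1 : (0 : ℝ) ≤ ((n : ℝ) - 2) * s ^ 2 := by
        apply mul_nonneg (by linarith) (sq_nonneg _)
      nlinarith [sq_nonneg (x N - y N), sq_nonneg (s - 3 * t / 2), sq_nonneg d]
    have hs2sq : s ^ 2 ≤ (5 * t / 2) ^ 2 := by nlinarith
    have hnum_ub : (n : ℝ) * s ^ 2 - D ^ 2 ≤ (n : ℝ) * (5 * t / 2) ^ 2 := by
      have h2 := mul_le_mul_of_nonneg_left hs2sq (by positivity : (0:ℝ) ≤ (n : ℝ))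
      nlinarith [sq_nonneg D]
    have hDpow_lb : (3 * t / 2) ^ (n + 2) ≤ D ^ (n + 2) :=
      pow_le_pow_left₀ (by linarith) (le_trans hs1 hDs) _
    have hDpow_ub : D ^ (n + 2) ≤ M ^ (n + 2) := pow_le_pow_left₀ hD0 hDM _
    have hDpow_pos : 0 < D ^ (n + 2) := pow_pos hDpos _
    have hker : harmonicKernel x y
        = C * (((n : ℝ) * s ^ 2 - D ^ 2) / D ^ (n + 2)) := by
      rw [harmonicKernel, hC, hlast, hlast]
    constructor
    · rw [hker, hc]
      apply mul_le_mul_of_nonneg_left _ (le_of_lt hCpos)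
      apply div_le_div₀ (by nlinarith [sq_nonneg t]) hnum_lb hDpow_pos hDpow_ub
    · rw [hker, hBdef]
      apply mul_le_mul_of_nonneg_left _ (le_of_lt hCpos)
      apply div_le_div₀ (by positivity) hnum_ub (by positivity) hDpow_lb
  refine ⟨K, hKsub, isCompact_closedBall τ r, ?_, c, hcpos, ?_⟩
  · rw [hK, interior_closedBall τ (ne_of_gt hrpos)]
    exact Metric.mem_ball_self hrpos
  intro E hE hEK x hx
  have hEU : E ⊆ upperHalfSpace n := hEK.trans hKsub
  have hvol : volume E ≠ ⊤ :=
    ne_of_lt (lt_of_le_of_lt (measure_mono hEK) (isCompact_closedBall τ r).measure_lt_top)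
  have heq : harmonicBergman (E.indicator fun _ => (1 : ℝ)) x
      = ∫ y in E, harmonicKernel x y := by
    rw [harmonicBergman]
    have hpt : ∀ y, harmonicKernel x y * (E.indicator (fun _ => (1 : ℝ)) y)
        = E.indicator (fun y => harmonicKernel x y) y := by
      intro y
      by_cases hy : y ∈ E <;> simp [indicator, hy]
    simp only [hpt]
    rw [setIntegral_indicator hE, inter_eq_self_of_subset_right hEU]
  rw [heq]
  have hint : IntegrableOn (fun y => harmonicKernel x y) E := by
    apply Measure.integrableOn_of_bounded hvol
      (measurable_kernel x).aestronglyMeasurable (M := B)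
    filter_upwards [ae_restrict_mem hE] with y hy
    have h2 := key x hx y (hEK hy)
    rw [Real.norm_eq_abs, abs_le]
    exact ⟨by linarith [h2.1, hcpos.le], h2.2⟩
  exact setIntegral_ge_of_const_le_real hE hvol (fun y hy => (key x hx y (hEK hy)).1) hint

end
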